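/- For 0 < s < 1, a > 0, b > 0, and |x| < a, the following inequality holds: (I_a(a) - I_a(x)) / (a² - x²)^{(1-s)/2} ≤ B((1+s)/2, (1-s)/2) / (x² + b²)^{1 - s/2}, where I_a(x) = ∫_0^∞ u^{(1-s)/2} / ((u + a² + b²)^{1-s/2}(u + a² - x²)) du and B is the Beta function. Consequently the density σ'_a(x) defined as a positive multiple of (B((1+s)/2,(1-s)/2)/(x²+b²)^{1-s/2} − (I_a(a) − I_a(x))/(a² − x²)^{(1-s)/2}) is nonnegative on (−a, a). -/

import Mathlib

open MeasureTheory Real Set Filter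

noncomputable def eulerBeta (p q : ℝ) : ℝ :=
  Real.Gamma p * Real.Gamma q / Real.Gamma (p + q)

/-- The integral `I_a(x)` from the paper. -/
noncomputable def Ia (s a b x : ℝ) : ℝ :=
  ∫ u in Ioi (0 : ℝ),
    u ^ ((1 - s) / 2) / ((u + a ^ 2 + b ^ 2) ^ (1 - s / 2) * (u + a ^ 2 - x ^ 2))

lemma realBeta (p q : ℝ) (hp : 0 < p) (hq : 0 < q) :
    ∫ x in Ioo (0:ℝ) 1, x ^ (p-1) * (1-x) ^ (q-1) =
      Real.Gamma p * Real.Gamma q / Real.Gamma (p+q) := by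
  have h := Complex.Gamma_mul_Gamma_eq_betaIntegral (s := (p:ℂ)) (t := (q:ℂ))
    (by simpa using hp) (by simpa using hq)
  rw [Complex.betaIntegral] at h
  have heq : ∀ x ∈ Set.uIcc (0:ℝ) 1,
      (x:ℂ) ^ ((p:ℂ)-1) * ((1:ℂ)-x) ^ ((q:ℂ)-1) =
        ((x ^ (p-1) * (1-x) ^ (q-1) : ℝ) : ℂ) := by
    intro x hx
    rw [Set.uIcc_of_le (by norm_num)] at hx
    rw [show ((p:ℂ)-1) = ((p-1 : ℝ) : ℂ) by push_cast; ring,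
        show ((q:ℂ)-1) = ((q-1 : ℝ) : ℂ) by push_cast; ring,
        show ((1:ℂ)-x) = ((1-x : ℝ) : ℂ) by push_cast; ring,
        ← Complex.ofReal_cpow hx.1, ← Complex.ofReal_cpow (by linarith [hx.2]),
        ← Complex.ofReal_mul]
  rw [intervalIntegral.integral_congr heq, intervalIntegral.integral_ofReal,
      ← Complex.ofReal_add (p) (q), Complex.Gamma_ofReal, Complex.Gamma_ofReal,
      Complex.Gamma_ofReal, ← Complex.ofReal_mul, ← Complex.ofReal_mul] at h
  have h' : Real.Gamma p * Real.Gamma q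
      = Real.Gamma (p+q) * ∫ x in (0:ℝ)..1, x ^ (p-1) * (1-x) ^ (q-1) := by
    exact_mod_cast h
  have hne : Real.Gamma (p+q) ≠ 0 := Real.Gamma_ne_zero (by
    intro m hEq
    have : (0:ℝ) ≤ (m:ℝ) := Nat.cast_nonneg m
    linarith)
  rw [← integral_Ioc_eq_integral_Ioo,
      ← intervalIntegral.integral_of_le (by norm_num : (0:ℝ) ≤ 1), h']
  field_simp

lemma keyIntegral (p c : ℝ) (hp : 0 < p) (hp1 : p < 1) (hc : 0 < c) :
    ∫ u in Ioi (0:ℝ), u ^ (p-1) / (u + c) =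
      c ^ (p-1) * (Real.Gamma p * Real.Gamma (1-p)) := by
  set f : ℝ → ℝ := fun x => c * x / (1 - x) with hf
  have himg : f '' Ioo 0 1 = Ioi (0:ℝ) := by
    ext y
    constructor
    · rintro ⟨x, ⟨hx0, hx1⟩, rfl⟩
      have : 0 < 1 - x := by linarith
      exact mem_Ioi.2 (by positivity)
    · intro hy
      have hy' : (0:ℝ) < y := hy
      refine ⟨y / (y + c), ⟨by positivity, by rw [div_lt_one (by positivity)]; linarith⟩, ?_⟩
      have h1 : 1 - y / (y + c) = c / (y + c) := by field_simp; ring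
      rw [hf]; dsimp only
      rw [h1]
      field_simp
  have hderiv : ∀ x ∈ Ioo (0:ℝ) 1, HasDerivWithinAt f (c / (1-x)^2) (Ioo 0 1) x := by
    intro x hx
    have hne : 1 - x ≠ 0 := by simp only [mem_Ioo] at hx; intro h; linarith [hx.2]
    have h1 : HasDerivAt (fun x : ℝ => c * x) c x := by
      simpa using (hasDerivAt_id x).const_mul c
    have h2 : HasDerivAt (fun x : ℝ => 1 - x) (-1) x := by
      simpa using (hasDerivAt_id x).const_sub 1
    have := h1.div h2 hne
    have heq : (c * (1-x) - c * x * (-1)) / (1-x)^2 = c / (1-x)^2 := by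
      field_simp; ring
    rw [heq] at this
    exact this.hasDerivWithinAt
  have hinj : InjOn f (Ioo 0 1) := by
    intro x hx y hy hxy
    simp only [mem_Ioo] at hx hy
    have hx1 : 1 - x ≠ 0 := by intro h; linarith [hx.2]
    have hy1 : 1 - y ≠ 0 := by intro h; linarith [hy.2]
    rw [hf] at hxy; dsimp only at hxy
    field_simp at hxy
    nlinarith [hxy]
  have key := integral_image_eq_integral_abs_deriv_smul measurableSet_Ioo hderiv hinj
    (fun u => u ^ (p-1) / (u + c))
  rw [himg] at key
  rw [key]
  have hptw : ∀ x ∈ Ioo (0:ℝ) 1,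
      |c / (1-x)^2| • (f x ^ (p-1) / (f x + c)) =
        c ^ (p-1) * (x ^ (p-1) * (1-x) ^ ((1-p)-1)) := by
    intro x hx
    simp only [mem_Ioo] at hx
    have h1x : 0 < 1 - x := by linarith [hx.2]
    have hfx : f x = c * x / (1 - x) := rfl
    have hfc : f x + c = c / (1 - x) := by rw [hfx]; field_simp; ring
    have hrp : f x ^ (p-1) = c ^ (p-1) * x ^ (p-1) * (1-x) ^ (-(p-1)) := by
      rw [hfx, div_eq_mul_inv, mul_rpow (mul_nonneg hc.le hx.1.le) (inv_nonneg.2 h1x.le),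
          mul_rpow (le_of_lt hc) (le_of_lt hx.1), inv_rpow h1x.le,
          ← rpow_neg h1x.le]
    have hB : (1-x) ^ (-(p-1)) = (1-x) ^ ((1-p)-1) * (1-x) := by
      rw [show -(p-1) = ((1-p)-1)+1 by ring, rpow_add h1x, rpow_one]
    rw [smul_eq_mul, abs_of_pos (by positivity), hfc, hrp, hB, pow_two]
    have e1 : (0:ℝ) < (1-x) ^ ((1-p)-1) := rpow_pos_of_pos h1x _
    field_simp
  rw [setIntegral_congr_fun measurableSet_Ioo hptw, integral_const_mul,
      realBeta p (1-p) hp (by linarith)]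
  rw [show p + (1-p) = 1 by ring, Real.Gamma_one]
  ring

lemma integrableAux {f : ℝ → ℝ} (hf : ContinuousOn f (Ioi 0)) (C : ℝ) {p q : ℝ}
    (hp : -1 < p) (hq : q < -1)
    (h1 : ∀ u ∈ Ioc (0:ℝ) 1, |f u| ≤ C * u ^ p)
    (h2 : ∀ u ∈ Ioi (1:ℝ), |f u| ≤ C * u ^ q) :
    IntegrableOn f (Ioi 0) := by
  rw [← Ioc_union_Ioi_eq_Ioi (zero_le_one' ℝ)]
  apply IntegrableOn.union
  · have hb : IntegrableOn (fun u : ℝ => C * u ^ p) (Ioc 0 1) := by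
      apply Integrable.const_mul
      have := (intervalIntegral.intervalIntegrable_rpow' (a := 0) (b := 1) hp)
      rwa [intervalIntegrable_iff_integrableOn_Ioc_of_le (zero_le_one' ℝ)] at this
    refine hb.mono' ((hf.mono Ioc_subset_Ioi_self).aestronglyMeasurable measurableSet_Ioc) ?_
    exact (ae_restrict_iff' measurableSet_Ioc).2 (ae_of_all _ h1)
  · have hb : IntegrableOn (fun u : ℝ => C * u ^ q) (Ioi 1) :=
      (integrableOn_Ioi_rpow_of_lt hq one_pos).const_mul C
    refine hb.mono' ((hf.mono (Ioi_subset_Ioi zero_le_one)).aestronglyMeasurable measurableSet_Ioi) ?_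
    exact (ae_restrict_iff' measurableSet_Ioi).2 (ae_of_all _ h2)

lemma integrableG {P c : ℝ} (hP : 0 < P) (hP1 : P < 1) (hc : 0 < c) :
    IntegrableOn (fun u => u ^ (P-1) / (u + c)) (Ioi 0) := by
  have hcont : ContinuousOn (fun u : ℝ => u ^ (P-1) / (u + c)) (Ioi 0) := by
    apply ContinuousOn.div
    · exact (continuousOn_id).rpow_const (fun u hu => Or.inl (ne_of_gt hu))
    · exact (continuousOn_id).add continuousOn_const
    · intro u hu
      have hu' : (0:ℝ) < u := hu
      exact ne_of_gt (by linarith)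
  refine integrableAux hcont (max c⁻¹ 1) (p := P - 1) (q := P - 2)
    (by linarith) (by linarith) ?_ ?_
  · intro u hu
    obtain ⟨hu0, hu1⟩ := hu
    have huP : (0:ℝ) < u ^ (P-1) := rpow_pos_of_pos hu0 _
    rw [abs_of_nonneg (by positivity)]
    calc u ^ (P-1) / (u + c) ≤ u ^ (P-1) / c :=
          div_le_div_of_nonneg_left huP.le hc (by linarith)
      _ = c⁻¹ * u ^ (P-1) := by ring
      _ ≤ max c⁻¹ 1 * u ^ (P-1) := by gcongr; exact le_max_left _ _
  · intro u hu
    have hu1 : (1:ℝ) < u := hu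
    have hu0 : (0:ℝ) < u := by linarith
    have huP : (0:ℝ) < u ^ (P-1) := rpow_pos_of_pos hu0 _
    rw [abs_of_nonneg (by positivity)]
    calc u ^ (P-1) / (u + c) ≤ u ^ (P-1) / u :=
          div_le_div_of_nonneg_left huP.le hu0 (by linarith)
      _ = u ^ (P-2) := by
          have h : u ^ (P-2) = u ^ (P-1) / u := by
            rw [show P-2 = (P-1)-1 by ring, rpow_sub hu0, rpow_one]
          exact h.symm
      _ ≤ max c⁻¹ 1 * u ^ (P-2) := by
          nth_rewrite 1 [← one_mul (u ^ (P-2))]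
          gcongr; exact le_max_right _ _

lemma integrableIa {P Q A c : ℝ} (hP : 0 < P) (hP1 : P < 1) (hPQ : P < Q) (hQ1 : Q ≤ 1)
    (hA : 0 < A) (hc : 0 ≤ c) :
    IntegrableOn (fun u => u ^ P / ((u + A) ^ Q * (u + c))) (Ioi 0) := by
  have hQ0 : 0 < Q := hP.trans hPQ
  have hcont : ContinuousOn (fun u : ℝ => u ^ P / ((u + A) ^ Q * (u + c))) (Ioi 0) := by
    apply ContinuousOn.div
    · exact (continuousOn_id).rpow_const (fun u hu => Or.inl (ne_of_gt hu))
    · exact (((continuousOn_id).add continuousOn_const).rpow_const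
        (fun u hu => Or.inl (by
          have hu' : (0:ℝ) < u := hu
          simp only [Pi.add_apply, id_eq]
          exact ne_of_gt (by linarith)))).mul
        ((continuousOn_id).add continuousOn_const)
    · intro u hu
      have hu' : (0:ℝ) < u := hu
      have : (0:ℝ) < (u + A) ^ Q := rpow_pos_of_pos (by linarith) _
      positivity
  refine integrableAux hcont (max (A ^ (-Q)) 1) (p := P - 1) (q := P - Q - 1)
    (by linarith) (by linarith) ?_ ?_
  · intro u hu
    obtain ⟨hu0, hu1⟩ := hu
    have huA : (0:ℝ) < u + A := by linarith
    have hApos : (0:ℝ) < A ^ Q := rpow_pos_of_pos hA _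
    have hb1 : A ^ Q * u ≤ (u + A) ^ Q * (u + c) := by
      have h1 : A ^ Q ≤ (u + A) ^ Q := rpow_le_rpow hA.le (by linarith) hQ0.le
      have h2 : u ≤ u + c := by linarith
      exact mul_le_mul h1 h2 hu0.le (rpow_pos_of_pos huA _).le
    have hfnn : (0:ℝ) ≤ u ^ P := (rpow_pos_of_pos hu0 _).le
    rw [abs_of_nonneg (by positivity)]
    calc u ^ P / ((u + A) ^ Q * (u + c)) ≤ u ^ P / (A ^ Q * u) :=
          div_le_div_of_nonneg_left hfnn (by positivity) hb1
      _ = A ^ (-Q) * u ^ (P - 1) := by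
          rw [rpow_neg hA.le, rpow_sub hu0, rpow_one]; field_simp
      _ ≤ max (A ^ (-Q)) 1 * u ^ (P - 1) := by
          gcongr
          exact le_max_left _ _
  · intro u hu
    have hu1 : (1:ℝ) < u := hu
    have hu0 : (0:ℝ) < u := by linarith
    have hb1 : u ^ Q * u ≤ (u + A) ^ Q * (u + c) := by
      have h1 : u ^ Q ≤ (u + A) ^ Q := rpow_le_rpow hu0.le (by linarith) hQ0.le
      exact mul_le_mul h1 (by linarith) hu0.le (rpow_pos_of_pos (by linarith) _).le
    rw [abs_of_nonneg (by positivity)]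
    calc u ^ P / ((u + A) ^ Q * (u + c)) ≤ u ^ P / (u ^ Q * u) :=
          div_le_div_of_nonneg_left (rpow_pos_of_pos hu0 _).le (by positivity) hb1
      _ = u ^ (P - Q - 1) := by
          rw [rpow_sub hu0, rpow_sub hu0, rpow_one]; field_simp
      _ ≤ max (A ^ (-Q)) 1 * u ^ (P - Q - 1) := by
          nth_rewrite 1 [← one_mul (u ^ (P - Q - 1))]
          gcongr
          exact le_max_right _ _

/-- The key inequality showing the measure `σ_a` is positive. -/
theorem sigma_density_nonneg (s a b x : ℝ) (hs0 : 0 < s) (hs1 : s < 1)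
    (ha : 0 < a) (hb : 0 < b) (hx : |x| < a) :
    (Ia s a b a - Ia s a b x) / (a ^ 2 - x ^ 2) ^ ((1 - s) / 2) ≤
      eulerBeta ((1 + s) / 2) ((1 - s) / 2) / (x ^ 2 + b ^ 2) ^ (1 - s / 2) := by
  obtain ⟨hx1, hx2⟩ := abs_lt.mp hx
  set P : ℝ := (1 - s) / 2 with hPdef
  set Q : ℝ := 1 - s / 2 with hQdef
  set A : ℝ := a ^ 2 + b ^ 2 with hAdef
  set c : ℝ := a ^ 2 - x ^ 2 with hcdef
  set D : ℝ := x ^ 2 + b ^ 2 with hDdef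
  have hc : 0 < c := by rw [hcdef]; nlinarith
  have hD : 0 < D := by rw [hDdef]; positivity
  have hA : 0 < A := by rw [hAdef]; positivity
  have hDA : D ≤ A := by rw [hDdef, hAdef]; nlinarith
  have hP : 0 < P := by rw [hPdef]; linarith
  have hP1 : P < 1 := by rw [hPdef]; linarith
  have hPQ : P < Q := by rw [hPdef, hQdef]; linarith
  have hQ1 : Q ≤ 1 := by rw [hQdef]; linarith
  have hQ0 : 0 < Q := hP.trans hPQ
  -- rewrite the two integrals
  have hIa_a : Ia s a b a = ∫ u in Ioi (0:ℝ), u ^ P / ((u + A) ^ Q * (u + 0)) := by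
    unfold Ia
    refine setIntegral_congr_fun measurableSet_Ioi (fun u hu => ?_)
    rw [show u + a ^ 2 + b ^ 2 = u + A by rw [hAdef]; ring,
        show u + a ^ 2 - a ^ 2 = u + 0 by ring]
  have hIa_x : Ia s a b x = ∫ u in Ioi (0:ℝ), u ^ P / ((u + A) ^ Q * (u + c)) := by
    unfold Ia
    refine setIntegral_congr_fun measurableSet_Ioi (fun u hu => ?_)
    rw [show u + a ^ 2 + b ^ 2 = u + A by rw [hAdef]; ring,
        show u + a ^ 2 - x ^ 2 = u + c by rw [hcdef]; ring]
  have hInt_a : IntegrableOn (fun u => u ^ P / ((u + A) ^ Q * (u + 0))) (Ioi 0) :=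
    integrableIa hP hP1 hPQ hQ1 hA le_rfl
  have hInt_x : IntegrableOn (fun u => u ^ P / ((u + A) ^ Q * (u + c))) (Ioi 0) :=
    integrableIa hP hP1 hPQ hQ1 hA hc.le
  have hG : IntegrableOn (fun u => c * D ^ (-Q) * (u ^ (P-1) / (u + c))) (Ioi 0) :=
    (integrableG hP hP1 hc).const_mul _
  have hsub : Ia s a b a - Ia s a b x =
      ∫ u in Ioi (0:ℝ), (u ^ P / ((u + A) ^ Q * (u + 0)) - u ^ P / ((u + A) ^ Q * (u + c))) := by
    rw [hIa_a, hIa_x, integral_sub hInt_a hInt_x]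
  have hpt : ∀ u ∈ Ioi (0:ℝ),
      u ^ P / ((u + A) ^ Q * (u + 0)) - u ^ P / ((u + A) ^ Q * (u + c)) ≤
        c * D ^ (-Q) * (u ^ (P-1) / (u + c)) := by
    intro u hu
    have hu0 : (0:ℝ) < u := hu
    have huA : (0:ℝ) < u + A := by linarith
    have huc : (0:ℝ) < u + c := by linarith
    have hAQ : (0:ℝ) < (u + A) ^ Q := rpow_pos_of_pos huA _
    have hDQ : (0:ℝ) < D ^ Q := rpow_pos_of_pos hD _
    have hle : D ^ Q ≤ (u + A) ^ Q := rpow_le_rpow hD.le (by linarith) hQ0.le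
    have huP : (0:ℝ) < u ^ P := rpow_pos_of_pos hu0 _
    have lhs_eq : u ^ P / ((u + A) ^ Q * (u + 0)) - u ^ P / ((u + A) ^ Q * (u + c)) =
        u ^ P * c / ((u + A) ^ Q * (u * (u + c))) := by
      rw [add_zero]
      field_simp
      ring
    rw [lhs_eq]
    have rhs_eq : c * D ^ (-Q) * (u ^ (P-1) / (u + c)) =
        u ^ P * c / (D ^ Q * (u * (u + c))) := by
      rw [rpow_neg hD.le, rpow_sub hu0, rpow_one]
      field_simp
    rw [rhs_eq]
    apply div_le_div_of_nonneg_left (by positivity) (by positivity)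
    have : (0:ℝ) < u * (u + c) := by positivity
    exact mul_le_mul_of_nonneg_right hle this.le
  have hmono : Ia s a b a - Ia s a b x ≤
      ∫ u in Ioi (0:ℝ), c * D ^ (-Q) * (u ^ (P-1) / (u + c)) := by
    rw [hsub]
    exact setIntegral_mono_on (hInt_a.sub hInt_x) hG measurableSet_Ioi hpt
  have hval : (∫ u in Ioi (0:ℝ), c * D ^ (-Q) * (u ^ (P-1) / (u + c))) =
      c ^ P * (Real.Gamma P * Real.Gamma (1-P) / D ^ Q) := by
    rw [integral_const_mul, keyIntegral P c hP hP1 hc, rpow_neg hD.le]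
    have hcc : c * c ^ (P-1) = c ^ P := by
      rw [rpow_sub hc, rpow_one]; field_simp
    rw [show c * (D ^ Q)⁻¹ * (c ^ (P-1) * (Real.Gamma P * Real.Gamma (1-P))) =
        (c * c ^ (P-1)) * (Real.Gamma P * Real.Gamma (1-P) / D ^ Q) by
      rw [div_eq_mul_inv]; ring, hcc]
  have hbeta : eulerBeta ((1 + s) / 2) ((1 - s) / 2) = Real.Gamma P * Real.Gamma (1-P) := by
    unfold eulerBeta
    rw [show (1+s)/2 + (1-s)/2 = 1 by ring, Real.Gamma_one,
        show (1:ℝ)-P = (1+s)/2 by rw [hPdef]; ring, ← hPdef]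
    ring
  have hcP : (0:ℝ) < c ^ P := rpow_pos_of_pos hc _
  rw [div_le_div_iff₀ hcP (rpow_pos_of_pos hD _)]
  calc (Ia s a b a - Ia s a b x) * D ^ Q
      ≤ (c ^ P * (Real.Gamma P * Real.Gamma (1-P) / D ^ Q)) * D ^ Q := by
        apply mul_le_mul_of_nonneg_right _ (rpow_pos_of_pos hD _).le
        exact hmono.trans (le_of_eq hval)
    _ = eulerBeta ((1 + s) / 2) ((1 - s) / 2) * c ^ P := by
        rw [hbeta]
        field_simp
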